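/- For every ε > 0 there exists N ∈ ℕ such that for all n ≥ N, for every n-digit Benford random variable Y taking values in the positive reals whose logarithm X = log₁₀ Y has a probability density function, and for all digits d₁ ∈ {1,…,9}, d₂,…,dₙ ∈ {0,…,9}, one has | 10^{n−1} · E[S_{d₁⋯dₙ} Y] − 1/ln 10 | < ε. That is, as n → ∞, the normalized expected significand sums of n-digit Benford variables converge, uniformly over all digit tuples, to 1/ln 10, the value characterizing sum-invariant (Benford) variables. -/

import Mathlib

open MeasureTheory Real Filter

/-- The base-10 significand `S(y) = 10 ^ (log₁₀ y − ⌊log₁₀ y⌋) ∈ [1,10)`. -/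
noncomputable def signif (y : ℝ) : ℝ :=
  (10 : ℝ) ^ (Real.logb 10 y - (⌊Real.logb 10 y⌋ : ℝ))

/-- `d : Fin n → ℕ` is a valid digit tuple: every digit is at most 9 and the
leading digit (index 0) is at least 1. -/
def IsDigitTuple (n : ℕ) (d : Fin n → ℕ) : Prop :=
  (∀ i, d i ≤ 9) ∧ ∀ i : Fin n, (i : ℕ) = 0 → 1 ≤ d i

/-- `xₙ = 10^(n−1) d₁ + 10^(n−2) d₂ + ⋯ + dₙ` for a digit tuple `d`. -/
def digitVal (n : ℕ) (d : Fin n → ℕ) : ℕ :=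
  ∑ i : Fin n, d i * 10 ^ (n - 1 - (i : ℕ))

/-- `y > 0` has first `n` significant digits given by the tuple `d` iff
`⌊10^(n−1) · S(y)⌋ = xₙ`. -/
def HasFirstDigits (n : ℕ) (d : Fin n → ℕ) (y : ℝ) : Prop :=
  ⌊(10 : ℝ) ^ (n - 1) * signif y⌋ = (digitVal n d : ℤ)

/-- A random variable `Y` on `(Ω, P)` is `n`-digit Benford if for every valid
digit tuple `d`, the probability that the first `n` significant digits of `Y`
are `d₁, …, dₙ` equals `log₁₀ (1 + 1/xₙ)`. -/
def NDigitBenford {Ω : Type*} [MeasurableSpace Ω] (P : Measure Ω) (Y : Ω → ℝ)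
    (n : ℕ) : Prop :=
  ∀ d : Fin n → ℕ, IsDigitTuple n d →
    P {ω | HasFirstDigits n d (Y ω)}
      = ENNReal.ofReal (Real.logb 10 (1 + 1 / (digitVal n d : ℝ)))

/-- The expected significand sum `E[S_{d₁⋯dₙ} Y]`: the expectation of `S(Y)`
restricted to the event that the first `n` significant digits of `Y` are `d`. -/
noncomputable def expSignifSum {Ω : Type*} [MeasurableSpace Ω] (P : Measure Ω)
    (Y : Ω → ℝ) (n : ℕ) (d : Fin n → ℕ) : ℝ :=
  ∫ ω, Set.indicator {ω | HasFirstDigits n d (Y ω)} (fun ω => signif (Y ω)) ω ∂P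

lemma measurable_signif : Measurable signif := by
  have h : Measurable (Real.logb 10) := Real.measurable_log.div_const _
  have h2 : Measurable fun y : ℝ => Real.logb 10 y - (⌊Real.logb 10 y⌋ : ℝ) :=
    h.sub (measurable_from_top.comp h.floor)
  have he : signif = fun y => Real.exp (Real.log 10 * (Real.logb 10 y - (⌊Real.logb 10 y⌋ : ℝ))) := by
    funext y; rw [signif, Real.rpow_def_of_pos (by norm_num)]
  rw [he]
  exact Real.measurable_exp.comp (measurable_const.mul h2)

lemma signif_pos (y : ℝ) : 0 < signif y := Real.rpow_pos_of_pos (by norm_num) _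

lemma tendsto_lower :
    Tendsto (fun x : ℝ => x * Real.logb 10 (1 + 1 / x)) atTop (nhds (1 / Real.log 10)) := by
  have h1 : Tendsto (fun x : ℝ => x * Real.log (1 + 1 / x)) atTop (nhds 1) := by
    simpa using Real.tendsto_mul_log_one_add_div_atTop 1
  have h2 := h1.div_const (Real.log 10)
  refine h2.congr fun x => ?_
  rw [Real.logb, mul_div_assoc]

lemma tendsto_logb_zero :
    Tendsto (fun x : ℝ => Real.logb 10 (1 + 1 / x)) atTop (nhds 0) := by
  have h0 : Tendsto (fun x : ℝ => 1 + 1 / x) atTop (nhds 1) := by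
    have := tendsto_inv_atTop_zero (𝕜 := ℝ)
    have h := tendsto_const_nhds (x := (1:ℝ)) (f := atTop).add this
    simpa [one_div] using h
  have hc : ContinuousAt (Real.logb 10) 1 := by
    apply ContinuousAt.div_const
    exact Real.continuousAt_log (by norm_num)
  have := hc.tendsto.comp h0
  simpa [Function.comp_def] using this

lemma tendsto_upper :
    Tendsto (fun x : ℝ => (x + 1) * Real.logb 10 (1 + 1 / x)) atTop (nhds (1 / Real.log 10)) := by
  have h := tendsto_lower.add tendsto_logb_zero
  refine (by simpa using h : Tendsto _ atTop (nhds (1 / Real.log 10))).congr fun x => ?_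
  ring

lemma digitVal_ge (n : ℕ) (hn : 1 ≤ n) (d : Fin n → ℕ) (hd : IsDigitTuple n d) :
    10 ^ (n - 1) ≤ digitVal n d := by
  let i0 : Fin n := ⟨0, hn⟩
  have hi0 : (i0 : ℕ) = 0 := rfl
  have h1 : 1 ≤ d i0 := hd.2 i0 hi0
  have hsum : d i0 * 10 ^ (n - 1 - (i0 : ℕ)) ≤ digitVal n d :=
    Finset.single_le_sum (f := fun i : Fin n => d i * 10 ^ (n - 1 - (i : ℕ)))
      (fun i _ => Nat.zero_le _) (Finset.mem_univ i0)
  rw [hi0, Nat.sub_zero] at hsum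
  calc 10 ^ (n - 1) = 1 * 10 ^ (n - 1) := (one_mul _).symm
    _ ≤ d i0 * 10 ^ (n - 1) := Nat.mul_le_mul_right _ h1
    _ ≤ digitVal n d := hsum

/-- **`n`-digit Benford variables converge to Benford in the sum-invariance
sense.** -/
theorem nDigitBenford_tendsto_sumInvariance :
    ∀ ε : ℝ, 0 < ε → ∃ N : ℕ, ∀ n : ℕ, N ≤ n →
      ∀ (Ω : Type) (_ : MeasurableSpace Ω) (P : Measure Ω),
        IsProbabilityMeasure P →
        ∀ Y : Ω → ℝ, Measurable Y → (∀ ω, 0 < Y ω) →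
        (∃ g : ℝ → ℝ, (∀ x, 0 ≤ g x) ∧ MeasureTheory.Integrable g ∧
          P.map (fun ω => Real.logb 10 (Y ω))
            = MeasureTheory.volume.withDensity (fun x => ENNReal.ofReal (g x))) →
        NDigitBenford P Y n →
        ∀ d : Fin n → ℕ, IsDigitTuple n d →
          |(10 : ℝ) ^ (n - 1) * expSignifSum P Y n d - 1 / Real.log 10| < ε := by
  intro ε hε
  obtain ⟨M1, hM1⟩ := Metric.tendsto_atTop.mp tendsto_lower ε hε
  obtain ⟨M2, hM2⟩ := Metric.tendsto_atTop.mp tendsto_upper ε hε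
  refine ⟨max 1 ⌈max M1 M2⌉₊, fun n hn Ω _ P hP Y hY hYpos _ hB d hd => ?_⟩
  have hn1 : 1 ≤ n := le_trans (le_max_left _ _) hn
  set x := digitVal n d with hxdef
  have hx10 : 10 ^ (n - 1) ≤ x := digitVal_ge n hn1 d hd
  have hnpow : n ≤ 10 ^ (n - 1) := by
    have := Nat.lt_pow_self (n := n - 1) (by norm_num : 1 < 10)
    omega
  set xr : ℝ := (x : ℝ) with hxr
  have hxrM : max M1 M2 ≤ xr := by
    have h1 : (⌈max M1 M2⌉₊ : ℝ) ≤ (n : ℝ) := by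
      exact_mod_cast le_trans (le_max_right _ _) hn
    have h2 : (n : ℝ) ≤ xr := by rw [hxr]; exact_mod_cast le_trans hnpow hx10
    exact le_trans (Nat.le_ceil _) (le_trans h1 h2)
  have hxr1 : 1 ≤ xr := by
    have h1 : 1 ≤ x := le_trans (Nat.one_le_pow _ _ (by norm_num)) hx10
    rw [hxr]; exact_mod_cast h1
  have hxr0 : 0 < xr := lt_of_lt_of_le one_pos hxr1
  set pn : ℝ := (10 : ℝ) ^ (n - 1) with hpn
  have hpn0 : 0 < pn := by positivity
  set L : ℝ := Real.logb 10 (1 + 1 / xr) with hL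
  have hL0 : 0 ≤ L := Real.logb_nonneg (by norm_num) (by
    have : 0 ≤ 1 / xr := by positivity
    linarith)
  set A : Set Ω := {ω | HasFirstDigits n d (Y ω)} with hA
  have hAmeas : MeasurableSet A := by
    have hm : Measurable fun ω => ⌊pn * signif (Y ω)⌋ :=
      (measurable_const.mul (measurable_signif.comp hY)).floor
    exact hm (measurableSet_singleton ((x : ℤ)))
  have hPA : (P A).toReal = L := by
    rw [hA, hB d hd, ENNReal.toReal_ofReal hL0]
  -- bounds on the significand on the event A
  have hbounds : ∀ ω ∈ A, xr ≤ pn * signif (Y ω) ∧ pn * signif (Y ω) < xr + 1 := by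
    intro ω hω
    have hfl : ⌊pn * signif (Y ω)⌋ = (x : ℤ) := hω
    rw [Int.floor_eq_iff] at hfl
    constructor
    · exact_mod_cast hfl.1
    · have := hfl.2; push_cast at this ⊢; linarith
  -- integrability
  have hfm : AEStronglyMeasurable (fun ω => A.indicator (fun ω => signif (Y ω)) ω) P := by
    exact ((measurable_signif.comp hY).indicator hAmeas).aestronglyMeasurable
  have hg2int : Integrable (A.indicator fun _ : Ω => (xr + 1) / pn) P :=
    (integrable_const _).indicator hAmeas
  have hg1int : Integrable (A.indicator fun _ : Ω => xr / pn) P :=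
    (integrable_const _).indicator hAmeas
  have hfle : ∀ ω, A.indicator (fun ω => signif (Y ω)) ω ≤ A.indicator (fun _ => (xr + 1) / pn) ω := by
    intro ω
    by_cases hω : ω ∈ A
    · rw [Set.indicator_of_mem hω, Set.indicator_of_mem hω]
      have h2 := (hbounds ω hω).2
      rw [le_div_iff₀ hpn0]
      nlinarith
    · simp [Set.indicator_of_notMem hω]
  have hgle1 : ∀ ω, A.indicator (fun _ => xr / pn) ω ≤ A.indicator (fun ω => signif (Y ω)) ω := by
    intro ω
    by_cases hω : ω ∈ A
    · rw [Set.indicator_of_mem hω, Set.indicator_of_mem hω]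
      have h1 := (hbounds ω hω).1
      rw [div_le_iff₀ hpn0]
      nlinarith
    · simp [Set.indicator_of_notMem hω]
  have hfabs : ∀ ω, ‖A.indicator (fun ω => signif (Y ω)) ω‖
      ≤ A.indicator (fun _ => (xr + 1) / pn) ω := by
    intro ω
    rw [Real.norm_eq_abs,
      abs_of_nonneg (Set.indicator_nonneg (fun ω _ => (signif_pos (Y ω)).le) ω)]
    exact hfle ω
  have hfint : Integrable (fun ω => A.indicator (fun ω => signif (Y ω)) ω) P :=
    hg2int.mono' hfm (Filter.Eventually.of_forall hfabs)
  have hElow : (P A).toReal • (xr / pn) ≤ expSignifSum P Y n d := by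
    rw [← measureReal_def, ← integral_indicator_const (xr / pn) hAmeas]
    exact integral_mono hg1int hfint hgle1
  have hEup : expSignifSum P Y n d ≤ (P A).toReal • ((xr + 1) / pn) := by
    rw [← measureReal_def, ← integral_indicator_const ((xr + 1) / pn) hAmeas]
    exact integral_mono hfint hg2int hfle
  rw [hPA, smul_eq_mul] at hElow hEup
  have hpnne : pn ≠ 0 := ne_of_gt hpn0
  have key1 : xr * L ≤ pn * expSignifSum P Y n d := by
    have := mul_le_mul_of_nonneg_left hElow hpn0.le
    calc xr * L = pn * (L * (xr / pn)) := by field_simp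
      _ ≤ pn * expSignifSum P Y n d := this
  have key2 : pn * expSignifSum P Y n d ≤ (xr + 1) * L := by
    have := mul_le_mul_of_nonneg_left hEup hpn0.le
    calc pn * expSignifSum P Y n d ≤ pn * (L * ((xr + 1) / pn)) := this
      _ = (xr + 1) * L := by field_simp
  have hd1 := hM1 xr (le_trans (le_max_left _ _) hxrM)
  have hd2 := hM2 xr (le_trans (le_max_right _ _) hxrM)
  rw [Real.dist_eq, abs_lt] at hd1 hd2
  rw [abs_lt]
  constructor
  · have : 1 / Real.log 10 - ε < xr * L := by rw [hL]; linarith [hd1.1]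
    linarith
  · have : (xr + 1) * L < 1 / Real.log 10 + ε := by rw [hL]; linarith [hd2.2]
    linarith
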